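/- Enumeration of chains of partitions by horizontal strips (skew Jacobi–Trudi at the principal specialization): let n ≥ 1 and N ≥ 0 be integers and let λ = (λ_1 ≥ ⋯ ≥ λ_n ≥ 0) and μ = (μ_1 ≥ ⋯ ≥ μ_n ≥ 0) be partitions with at most n parts. Then the number of sequences of partitions (ν^{(0)}, ν^{(1)}, …, ν^{(N)}) with ν^{(0)} = μ, ν^{(N)} = λ, and such that for each 1 ≤ m ≤ N the skew diagram ν^{(m)}∖ν^{(m−1)} is a horizontal strip (i.e. ν^{(m−1)}_i ≤ ν^{(m)}_i and ν^{(m)}_{i+1} ≤ ν^{(m−1)}_i for all i ≥ 1) equals det( h_{λ_i − i − μ_j + j} )_{1 ≤ i, j ≤ n}, where h_r := binom(N + r − 1, r) for r ≥ 0 and h_r := 0 for r < 0. -/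

import Mathlib

/-- Extend a partition given as a vector `Fin n → ℕ` by zeros to a function `ℕ → ℕ`. -/
def extendPartition {n : ℕ} (lam : Fin n → ℕ) (i : ℕ) : ℕ :=
  if h : i < n then lam ⟨i, h⟩ else 0

/-- `h_r = binom (N + r - 1) r` for `r ≥ 0` (the number of monomials of degree `r` in
`N` variables, i.e. the complete homogeneous symmetric polynomial of degree `r` at
`N` variables all equal to `1`), and `h_r = 0` for `r < 0`. -/
def hCoef (N : ℕ) (r : ℤ) : ℕ :=
  if 0 ≤ r then Nat.choose (N + r.toNat - 1) r.toNat else 0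

namespace SJT

variable {n : ℕ}

lemma extend_coe (lam : Fin n → ℕ) (i : Fin n) : extendPartition lam i = lam i := by
  simp [extendPartition, i.isLt]

lemma extend_of_le (lam : Fin n → ℕ) {i : ℕ} (h : n ≤ i) : extendPartition lam i = 0 := by
  simp [extendPartition, Nat.not_lt.mpr h]

lemma extend_antitone {lam : Fin n → ℕ} (h : Antitone lam) :
    Antitone (extendPartition lam) := by
  intro a b hab
  unfold extendPartition
  by_cases hb : b < n
  · rw [dif_pos hb, dif_pos (lt_of_le_of_lt hab hb)]
    exact h (show (⟨a, _⟩ : Fin n) ≤ ⟨b, hb⟩ from hab)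
  · rw [dif_neg hb]; exact Nat.zero_le _

lemma extend_inj {lam mu : Fin n → ℕ}
    (h : extendPartition lam = extendPartition mu) : lam = mu := by
  funext i
  have := congrFun h i
  rwa [extend_coe, extend_coe] at this

lemma hCoef_of_neg {N : ℕ} {r : ℤ} (h : r < 0) : hCoef N r = 0 := by
  simp [hCoef, not_le.mpr h]

lemma hCoef_coe (N t : ℕ) : hCoef N (t : ℤ) = Nat.choose (N + t - 1) t := by
  simp [hCoef]

lemma hCoef_succ (N : ℕ) (r : ℤ) :
    hCoef (N + 1) r = hCoef (N + 1) (r - 1) + hCoef N r := by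
  rcases lt_trichotomy r 0 with h | h | h
  · rw [hCoef_of_neg h, hCoef_of_neg (by omega), hCoef_of_neg h]
  · subst h
    norm_num [hCoef]
  · obtain ⟨t, rfl⟩ : ∃ t : ℕ, r = (t : ℤ) := ⟨r.toNat, (Int.toNat_of_nonneg h.le).symm⟩
    obtain ⟨s, rfl⟩ : ∃ s, t = s + 1 := ⟨t - 1, by omega⟩
    have h1 : ((s + 1 : ℕ) : ℤ) - 1 = ((s : ℕ) : ℤ) := by push_cast; ring
    rw [h1, hCoef_coe, hCoef_coe, hCoef_coe]
    have e1 : N + 1 + (s + 1) - 1 = (N + s) + 1 := by omega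
    have e2 : N + 1 + s - 1 = N + s := by omega
    have e3 : N + (s + 1) - 1 = N + s := by omega
    rw [e1, e2, e3, Nat.choose_succ_succ]


lemma hCoef_zeroN (r : ℤ) : hCoef 0 r = if r = 0 then 1 else 0 := by
  rcases lt_trichotomy r 0 with h | h | h
  · rw [hCoef_of_neg h, if_neg h.ne]
  · subst h; norm_num [hCoef]
  · rw [if_neg h.ne']
    have ht : 1 ≤ r.toNat := by omega
    simp only [hCoef, if_pos h.le, Nat.zero_add]
    exact Nat.choose_eq_zero_of_lt (by omega)

lemma sum_hCoef_Icc (N : ℕ) (e : ℤ) :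
    ∀ b a : ℕ, a ≤ b →
      ∑ c ∈ Finset.Icc a b, (hCoef N ((c : ℤ) + e) : ℤ)
        = (hCoef (N + 1) ((b : ℤ) + e) : ℤ) - (hCoef (N + 1) ((a : ℤ) - 1 + e) : ℤ) := by
  intro b a hab
  induction b, hab using Nat.le_induction with
  | base =>
    rw [Finset.Icc_self, Finset.sum_singleton]
    have := hCoef_succ N ((a : ℤ) + e)
    have harg : (a : ℤ) + e - 1 = (a : ℤ) - 1 + e := by ring
    rw [harg] at this
    push_cast [this]
    ring
  | succ b hb ih =>
    rw [Finset.sum_Icc_succ_top (by omega), ih]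
    have := hCoef_succ N (((b : ℕ) : ℤ) + 1 + e)
    have harg : ((b : ℕ) : ℤ) + 1 + e - 1 = (b : ℤ) + e := by ring
    rw [harg] at this
    push_cast [this]
    ring

lemma tele (f : ℕ → ℤ) : ∀ b a : ℕ, a ≤ b →
    ∑ k ∈ Finset.Ico a b, (f k - f (k + 1)) = f a - f b := by
  intro b a hab
  induction b, hab using Nat.le_induction with
  | base => simp
  | succ b hb ih => rw [Finset.sum_Ico_succ_top hb, ih]; ring


def Chains (n N : ℕ) (lam mu : Fin n → ℕ) : Type :=
  {ν : Fin (N + 1) → ℕ → ℕ //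
      (∀ m, Antitone (ν m)) ∧
      ν 0 = extendPartition mu ∧
      ν (Fin.last N) = extendPartition lam ∧
      ∀ (m : Fin N) (i : ℕ),
        ν m.castSucc i ≤ ν m.succ i ∧ ν m.succ (i + 1) ≤ ν m.castSucc i}

lemma chain_mono {N : ℕ} {ν : Fin (N + 1) → ℕ → ℕ}
    (hs : ∀ (m : Fin N) (i : ℕ),
      ν m.castSucc i ≤ ν m.succ i ∧ ν m.succ (i + 1) ≤ ν m.castSucc i) :
    ∀ (k : ℕ) (hk : k < N + 1) (j : ℕ) (hj : j ≤ k) (i : ℕ),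
      ν ⟨j, by omega⟩ i ≤ ν ⟨k, hk⟩ i := by
  intro k
  induction k with
  | zero =>
    intro hk j hj i
    have : j = 0 := by omega
    subst this
    exact le_rfl
  | succ k ih =>
    intro hk j hj i
    rcases Nat.eq_or_lt_of_le hj with h | h
    · subst h; exact le_rfl
    · have hj' : j ≤ k := by omega
      have h1 := ih (by omega) j hj' i
      have h2 := (hs ⟨k, by omega⟩ i).1
      rw [Fin.castSucc_mk, Fin.succ_mk] at h2
      exact le_trans h1 h2

lemma chain_le_top {N : ℕ} {lam mu : Fin n → ℕ} (ν : Chains n N lam mu)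
    (m : Fin (N + 1)) (i : ℕ) : ν.1 m i ≤ extendPartition lam i := by
  obtain ⟨ν, h1, h2, h3, h4⟩ := ν
  have h5 := chain_mono h4 N (by omega) m.val (by omega) i
  have e1 : (⟨m.val, by omega⟩ : Fin (N + 1)) = m := Fin.ext rfl
  have e2 : (⟨N, by omega⟩ : Fin (N + 1)) = Fin.last N := Fin.ext rfl
  rw [e1, e2, h3] at h5
  exact h5

instance chains_finite {N : ℕ} {lam mu : Fin n → ℕ} : Finite (Chains n N lam mu) := by
  let f : Chains n N lam mu → (Fin (N + 1) → ∀ i : Fin n, Fin (lam i + 1)) :=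
    fun ν m i => ⟨ν.1 m i, by
      have := chain_le_top ν m i
      rw [extend_coe] at this
      omega⟩
  apply Finite.of_injective f
  intro ν ν' h
  apply Subtype.ext
  funext m i
  by_cases hi : i < n
  · have := congrFun (congrFun h m) ⟨i, hi⟩
    exact congrArg Fin.val this
  · have h1 := chain_le_top ν m i
    have h2 := chain_le_top ν' m i
    rw [extend_of_le _ (by omega)] at h1 h2
    omega

def HS (n : ℕ) (lam : Fin n → ℕ) : Finset (Fin n → ℕ) :=
  Fintype.piFinset fun i => Finset.Icc (extendPartition lam ((i : ℕ) + 1)) (lam i)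

lemma mem_HS {lam κ : Fin n → ℕ} :
    κ ∈ HS n lam ↔
      ∀ i : Fin n, extendPartition lam ((i : ℕ) + 1) ≤ κ i ∧ κ i ≤ lam i := by
  simp [HS, Fintype.mem_piFinset, Finset.mem_Icc]

lemma HS_antitone {lam κ : Fin n → ℕ} (hκ : κ ∈ HS n lam) : Antitone κ := by
  rw [mem_HS] at hκ
  have key : ∀ (y : ℕ) (hy : y < n) (x : ℕ) (hx : x < n), x ≤ y →
      κ ⟨y, hy⟩ ≤ κ ⟨x, hx⟩ := by
    intro y
    induction y with
    | zero =>
      intro hy x hx hxy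
      have : x = 0 := by omega
      subst this
      exact le_rfl
    | succ y ih =>
      intro hy x hx hxy
      rcases Nat.eq_or_lt_of_le hxy with h | h
      · subst h; exact le_rfl
      · have h1 := (hκ ⟨y + 1, hy⟩).2
        have h2 := (hκ ⟨y, by omega⟩).1
        have h3 : extendPartition lam (y + 1) = lam ⟨y + 1, hy⟩ := by
          simp [extendPartition, hy]
        refine le_trans (le_trans h1 ?_) (ih (by omega) x hx (by omega))
        rw [← h3]
        exact h2
  intro a b hab
  have := key b.val b.isLt a.val a.isLt hab
  simpa using this

lemma ext_strip {lam κ : Fin n → ℕ} (hκ : κ ∈ HS n lam) (i : ℕ) :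
    extendPartition κ i ≤ extendPartition lam i ∧
      extendPartition lam (i + 1) ≤ extendPartition κ i := by
  rw [mem_HS] at hκ
  by_cases hi : i < n
  · have h1 := hκ ⟨i, hi⟩
    constructor
    · rw [show extendPartition κ i = κ ⟨i, hi⟩ from by simp [extendPartition, hi],
        show extendPartition lam i = lam ⟨i, hi⟩ from by simp [extendPartition, hi]]
      exact h1.2
    · rw [show extendPartition κ i = κ ⟨i, hi⟩ from by simp [extendPartition, hi]]
      exact h1.1
  · constructor
    · rw [extend_of_le _ (by omega)]; exact Nat.zero_le _
    · rw [extend_of_le _ (by omega), extend_of_le _ (by omega)]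

lemma card_base (lam mu : Fin n → ℕ) (hmu : Antitone mu) :
    Nat.card (Chains n 0 lam mu) = if lam = mu then 1 else 0 := by
  by_cases h : lam = mu
  · subst h
    rw [if_pos rfl]
    haveI : Unique (Chains n 0 lam lam) :=
      { default := ⟨fun _ => extendPartition lam,
          fun _ => extend_antitone hmu, rfl, rfl, fun m => m.elim0⟩
        uniq := by
          intro ν
          apply Subtype.ext
          funext m
          have hm : m = 0 := Fin.ext (by omega)
          rw [hm, ν.2.2.1] }
    exact Nat.card_unique
  · rw [if_neg h]
    haveI : IsEmpty (Chains n 0 lam mu) := by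
      constructor
      intro ν
      apply h
      apply extend_inj
      have h1 := ν.2.2.1
      have h2 := ν.2.2.2.1
      exact (h2.symm.trans (congrArg _ (Fin.ext rfl))).trans h1
    exact Nat.card_of_isEmpty


def Bmat (n N : ℕ) (kap mu : Fin n → ℕ) : Matrix (Fin n) (Fin n) ℤ :=
  Matrix.of fun i j => (hCoef N ((kap i : ℤ) - (i : ℤ) - (mu j : ℤ) + (j : ℤ)) : ℤ)

lemma det_base (lam mu : Fin n → ℕ) (hlam : Antitone lam) (hmu : Antitone mu) :
    (Bmat n 0 lam mu).det = if lam = mu then 1 else 0 := by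
  by_cases h : lam = mu
  · subst h
    rw [if_pos rfl]
    have hone : Bmat n 0 lam lam = 1 := by
      ext i j
      rw [Bmat, Matrix.of_apply, hCoef_zeroN, Matrix.one_apply]
      by_cases hij : i = j
      · subst hij
        rw [if_pos (by ring : (lam i : ℤ) - (i : ℤ) - (lam i : ℤ) + (i : ℤ) = 0), if_pos rfl]
        simp
      · have hne : ¬((lam i : ℤ) - (i : ℤ) - (lam j : ℤ) + (j : ℤ) = 0) := by
          rcases lt_or_gt_of_ne hij with hlt | hgt
          · have h1 : lam j ≤ lam i := hlam hlt.le
            have h2 : (i : ℕ) < (j : ℕ) := hlt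
            omega
          · have h1 : lam i ≤ lam j := hlam hgt.le
            have h2 : (j : ℕ) < (i : ℕ) := hgt
            omega
        rw [if_neg hne, if_neg hij]
        simp
    rw [hone, Matrix.det_one]
  · rw [if_neg h, Matrix.det_apply]
    refine Finset.sum_eq_zero fun σ _ => ?_
    by_cases hz : ∀ i, Bmat n 0 lam mu (σ i) i ≠ 0
    · exfalso
      apply h
      have hf : ∀ i : Fin n, (lam (σ i) : ℤ) - (σ i : ℤ) = (mu i : ℤ) - (i : ℤ) := by
        intro i
        have h1 := hz i
        rw [Bmat, Matrix.of_apply, hCoef_zeroN] at h1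
        by_contra hc
        apply h1
        rw [if_neg (by intro hc2; apply hc; omega)]
        rfl
      have hsm : StrictMono σ := by
        intro a b hab
        by_contra hc
        push_neg at hc
        have hne : σ a ≠ σ b := fun e => (Fin.ne_of_lt hab) (σ.injective e)
        have hlt : σ b < σ a := lt_of_le_of_ne hc (Ne.symm hne)
        have k1 := hf a
        have k2 := hf b
        have m1 : mu b ≤ mu a := hmu hab.le
        have m2 : (a : ℕ) < (b : ℕ) := hab
        have l1 : lam (σ a) ≤ lam (σ b) := hlam hlt.le
        have l2 : ((σ b : ℕ)) < ((σ a : ℕ)) := hlt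
        omega
      haveI : WellFoundedLT (Fin n) := Finite.to_wellFoundedLT
      have hid : ∀ i, σ i = i := by
        intro i
        have h1 : i ≤ σ i := hsm.le_apply
        have hsm' : StrictMono ⇑σ.symm := fun a b hab => by
          rcases lt_trichotomy (σ.symm a) (σ.symm b) with hh | hh | hh
          · exact hh
          · exfalso; rw [← σ.apply_symm_apply a, ← σ.apply_symm_apply b, hh] at hab
            exact lt_irrefl _ hab
          · exfalso
            have := hsm hh
            rw [σ.apply_symm_apply, σ.apply_symm_apply] at this
            exact lt_asymm hab this
        have h2 : σ i ≤ σ.symm (σ i) := hsm'.le_apply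
        rw [σ.symm_apply_apply] at h2
        exact le_antisymm h2 h1
      funext i
      have := hf i
      rw [hid i] at this
      omega
    · push_neg at hz
      obtain ⟨i, hi⟩ := hz
      have hp : ∏ x : Fin n, Bmat n 0 lam mu (σ x) x = 0 :=
        Finset.prod_eq_zero (Finset.mem_univ i) hi
      rw [hp, smul_zero]

lemma det_step (N : ℕ) (lam mu : Fin n → ℕ) (hlam : Antitone lam) :
    (Bmat n (N + 1) lam mu).det = ∑ κ ∈ HS n lam, (Bmat n N κ mu).det := by
  classical
  set T : Matrix (Fin n) (Fin n) ℤ :=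
    Matrix.of (fun i k : Fin n => if i ≤ k then 1 else 0) with hT
  set M : Matrix (Fin n) (Fin n) ℤ := Matrix.of (fun k j : Fin n =>
    ∑ c ∈ Finset.Icc (extendPartition lam ((k : ℕ) + 1)) (lam k),
      (hCoef N ((c : ℤ) - (k : ℤ) - (mu j : ℤ) + (j : ℤ)) : ℤ)) with hM
  have key : Bmat n (N + 1) lam mu = T * M := by
    ext i j
    rw [Matrix.mul_apply]
    set Q : ℕ → ℤ := fun k =>
      (hCoef (N + 1) ((extendPartition lam k : ℤ) - (k : ℤ) - (mu j : ℤ) + (j : ℤ)) : ℤ)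
      with hQ
    have hMk : ∀ k : Fin n, M k j = Q (k : ℕ) - Q ((k : ℕ) + 1) := by
      intro k
      rw [hM, Matrix.of_apply]
      have hab : extendPartition lam ((k : ℕ) + 1) ≤ lam k := by
        have h1 := extend_antitone hlam (show (k : ℕ) ≤ (k : ℕ) + 1 by omega)
        rwa [extend_coe] at h1
      have := sum_hCoef_Icc N (-(k : ℤ) - (mu j : ℤ) + (j : ℤ)) (lam k)
        (extendPartition lam ((k : ℕ) + 1)) hab
      rw [show ∑ c ∈ Finset.Icc (extendPartition lam ((k : ℕ) + 1)) (lam k),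
            (hCoef N ((c : ℤ) - (k : ℤ) - (mu j : ℤ) + (j : ℤ)) : ℤ)
          = ∑ c ∈ Finset.Icc (extendPartition lam ((k : ℕ) + 1)) (lam k),
            (hCoef N ((c : ℤ) + (-(k : ℤ) - (mu j : ℤ) + (j : ℤ))) : ℤ) from
        Finset.sum_congr rfl fun c _ => by congr 2; ring, this]
      simp only [hQ]
      have g1 : ((lam k : ℕ) : ℤ) + (-(k : ℤ) - (mu j : ℤ) + (j : ℤ))
          = (extendPartition lam (k : ℕ) : ℤ) - ((k : ℕ) : ℤ) - (mu j : ℤ) + (j : ℤ) := by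
        rw [extend_coe]; push_cast; ring
      have g2 : ((extendPartition lam ((k : ℕ) + 1) : ℕ) : ℤ) - 1
            + (-(k : ℤ) - (mu j : ℤ) + (j : ℤ))
          = (extendPartition lam ((k : ℕ) + 1) : ℤ) - (((k : ℕ) + 1 : ℕ) : ℤ)
            - (mu j : ℤ) + (j : ℤ) := by
        push_cast; ring
      rw [g1, g2]
    have hstep : ∀ k : Fin n,
        T i k * M k j = (fun k : ℕ => if (i : ℕ) ≤ k then Q k - Q (k + 1) else 0) (k : ℕ) := by
      intro k
      show T i k * M k j
        = if (i : ℕ) ≤ (k : ℕ) then Q (k : ℕ) - Q ((k : ℕ) + 1) else 0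
      rw [hT, Matrix.of_apply, hMk k]
      by_cases hik : i ≤ k
      · rw [if_pos hik, if_pos (Fin.le_def.mp hik), one_mul]
      · rw [if_neg hik, if_neg (fun hc => hik (Fin.le_def.mpr hc)), zero_mul]
    rw [Finset.sum_congr rfl (fun k _ => hstep k),
      Fin.sum_univ_eq_sum_range (fun k : ℕ => if (i : ℕ) ≤ k then Q k - Q (k + 1) else 0) n,
      ← Finset.sum_filter]
    have hfilt : (Finset.range n).filter (fun k => (i : ℕ) ≤ k) = Finset.Ico (i : ℕ) n := by
      ext x
      simp only [Finset.mem_filter, Finset.mem_range, Finset.mem_Ico]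
      omega
    rw [hfilt, tele Q n (i : ℕ) i.isLt.le]
    have hQn : Q n = 0 := by
      simp only [hQ]
      rw [extend_of_le lam le_rfl, hCoef_of_neg (by
        have hj : (j : ℕ) < n := j.isLt
        push_cast
        omega)]
      simp
    rw [hQn, sub_zero]
    simp only [hQ, Bmat, Matrix.of_apply, extend_coe]
  rw [key, Matrix.det_mul]
  have hdetT : T.det = 1 := by
    rw [Matrix.det_of_upperTriangular]
    · simp [hT]
    · intro a b hba
      rw [hT, Matrix.of_apply, if_neg (by exact fun hc => absurd (lt_of_le_of_lt hc hba) (lt_irrefl _))]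
  rw [hdetT, one_mul]
  have hdetM : M.det = ∑ κ ∈ HS n lam, (Bmat n N κ mu).det := by
    have hrow : (M : Matrix (Fin n) (Fin n) ℤ) = fun k : Fin n =>
        ∑ c ∈ Finset.Icc (extendPartition lam ((k : ℕ) + 1)) (lam k),
          (fun j : Fin n => (hCoef N ((c : ℤ) - (k : ℤ) - (mu j : ℤ) + (j : ℤ)) : ℤ)) := by
      funext k j
      rw [hM]
      rw [Finset.sum_apply]
      rfl
    show Matrix.detRowAlternating M = _
    rw [hrow]
    exact ((Matrix.detRowAlternating (R := ℤ) (n := Fin n)).toMultilinearMap.map_sum_finset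
      (fun (k : Fin n) (c : ℕ) => (fun j : Fin n => (hCoef N ((c : ℤ) - (k : ℤ) - (mu j : ℤ) + (j : ℤ)) : ℤ)))
      (fun k : Fin n => Finset.Icc (extendPartition lam ((k : ℕ) + 1)) (lam k))).trans rfl
  exact hdetM


lemma nat_card_sigma {ι : Type*} [Fintype ι] (f : ι → Type*) [∀ i, Finite (f i)] :
    Nat.card (Σ i, f i) = ∑ i, Nat.card (f i) := by
  letI : ∀ i, Fintype (f i) := fun i => Fintype.ofFinite _
  classical
  simp only [Nat.card_eq_fintype_card]
  exact Fintype.card_sigma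

lemma card_step (N : ℕ) (lam mu : Fin n → ℕ) (hlam : Antitone lam) :
    Nat.card (Chains n (N + 1) lam mu) = ∑ κ ∈ HS n lam, Nat.card (Chains n N κ mu) := by
  classical
  have e : Chains n (N + 1) lam mu ≃
      (Σ κ : {κ : Fin n → ℕ // κ ∈ HS n lam}, Chains n N κ.1 mu) := by
    refine
      { toFun := fun ν => ⟨⟨fun i => ν.1 ((Fin.last N).castSucc) i, ?_⟩,
          ⟨fun m => ν.1 m.castSucc, ?_, ?_, ?_, ?_⟩⟩
        invFun := fun p => ⟨Fin.snoc p.2.1 (extendPartition lam), ?_, ?_, ?_, ?_⟩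
        left_inv := ?_
        right_inv := ?_ }
    · -- κ ∈ HS n lam
      obtain ⟨ν, h1, h2, h3, h4⟩ := ν
      rw [mem_HS]
      intro i
      have hs := h4 (Fin.last N) (i : ℕ)
      rw [Fin.succ_last, h3] at hs
      refine ⟨hs.2, ?_⟩
      have := hs.1
      rwa [extend_coe] at this
    · -- antitone
      exact fun m => ν.2.1 m.castSucc
    · -- at 0
      show ν.1 (Fin.castSucc 0) = extendPartition mu
      rw [Fin.castSucc_zero]
      exact ν.2.2.1
    · -- at last
      obtain ⟨ν, h1, h2, h3, h4⟩ := ν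
      funext x
      by_cases hx : x < n
      · simp only [extendPartition, dif_pos hx]
      · have hs := h4 (Fin.last N) x
        rw [Fin.succ_last, h3] at hs
        have h5 := hs.1
        rw [extend_of_le lam (by omega)] at h5
        simp only [extendPartition, dif_neg hx]
        omega
    · -- strips
      intro m i
      have := ν.2.2.2.2 m.castSucc i
      rwa [Fin.succ_castSucc] at this
    · -- invFun antitone
      intro m
      refine Fin.lastCases ?_ ?_ m
      · rw [Fin.snoc_last]
        exact extend_antitone hlam
      · intro m'
        rw [Fin.snoc_castSucc]
        exact p.2.2.1 m'
    · -- invFun at 0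
      rw [show (0 : Fin (N + 1 + 1)) = Fin.castSucc 0 from (Fin.castSucc_zero).symm,
        Fin.snoc_castSucc]
      exact p.2.2.2.1
    · -- invFun at last
      rw [Fin.snoc_last]
    · -- invFun strips
      intro m i
      refine Fin.lastCases ?_ ?_ m
      · rw [Fin.succ_last, Fin.snoc_last, Fin.snoc_castSucc, p.2.2.2.2.1]
        have h1 := ext_strip p.1.2 i
        exact ⟨h1.1, h1.2⟩
      · intro m'
        rw [Fin.succ_castSucc, Fin.snoc_castSucc, Fin.snoc_castSucc]
        exact p.2.2.2.2.2 m' i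
    · -- left_inv
      intro ν
      apply Subtype.ext
      show Fin.snoc (fun m : Fin (N + 1) => ν.1 m.castSucc) (extendPartition lam) = ν.1
      funext m
      refine Fin.lastCases ?_ ?_ m
      · rw [Fin.snoc_last]
        exact ν.2.2.2.1.symm
      · intro m'
        rw [Fin.snoc_castSucc]
    · -- right_inv
      rintro ⟨⟨κ, hκ⟩, q, hq⟩
      have hkk : (fun i : Fin n =>
          Fin.snoc (α := fun _ => ℕ → ℕ) q (extendPartition lam)
            ((Fin.last N).castSucc) (i : ℕ)) = κ := by
        funext i
        show Fin.snoc (α := fun _ => ℕ → ℕ) q (extendPartition lam)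
            ((Fin.last N).castSucc) (i : ℕ) = κ i
        rw [Fin.snoc_castSucc, hq.2.2.1, extend_coe]
      refine Sigma.ext (Subtype.ext hkk) ?_
      apply (Subtype.heq_iff_coe_eq ?_).mpr
      · funext m
        show Fin.snoc (α := fun _ => ℕ → ℕ) q (extendPartition lam) m.castSucc = q m
        rw [Fin.snoc_castSucc]
      · intro x
        have hkk2 : extendPartition (fun i : Fin n =>
            Fin.snoc (α := fun _ => ℕ → ℕ) q (extendPartition lam)
              ((Fin.last N).castSucc) (i : ℕ)) = extendPartition κ := by
          rw [hkk]
        constructor <;> (rintro ⟨a1, a2, a3, a4⟩; refine ⟨a1, a2, ?_, a4⟩)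
        · exact a3.trans hkk2
        · exact a3.trans hkk2.symm
  rw [Nat.card_congr e, nat_card_sigma, ← Finset.sum_coe_sort (HS n lam)
    (fun κ => Nat.card (Chains n N κ mu))]


theorem main (N : ℕ) (lam mu : Fin n → ℕ) (hlam : Antitone lam) (hmu : Antitone mu) :
    (Nat.card (Chains n N lam mu) : ℤ) = (Bmat n N lam mu).det := by
  induction N generalizing lam with
  | zero =>
    rw [card_base lam mu hmu, det_base lam mu hlam hmu]
    split_ifs <;> simp
  | succ N ih =>
    rw [card_step N lam mu hlam, det_step N lam mu hlam]
    push_cast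
    refine Finset.sum_congr rfl fun kap hkap => ?_
    exact ih kap (HS_antitone hkap)

end SJT

theorem skew_jacobi_trudi_principal (n : ℕ) (hn : 1 ≤ n) (N : ℕ)
    (lam mu : Fin n → ℕ) (hlam : Antitone lam) (hmu : Antitone mu) :
    (Nat.card {ν : Fin (N + 1) → ℕ → ℕ //
        (∀ m, Antitone (ν m)) ∧
        ν 0 = extendPartition mu ∧
        ν (Fin.last N) = extendPartition lam ∧
        ∀ (m : Fin N) (i : ℕ),
          ν m.castSucc i ≤ ν m.succ i ∧ ν m.succ (i + 1) ≤ ν m.castSucc i} : ℤ)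
      = Matrix.det (Matrix.of fun i j : Fin n =>
          (hCoef N ((lam i : ℤ) - (i : ℤ) - (mu j : ℤ) + (j : ℤ)) : ℤ)) := by
  exact SJT.main N lam mu hlam hmu
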